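/- Suppose |b|_p > |c|_p and let x ∈ ℚ_p with x ≠ −c. Then: (i) if |x|_p < |c|_p then |f(x)|_p = (|a|_p·|b|_p²/|c|_p²)·|x|_p; (ii) if |c|_p < |x|_p < |b|_p then |f(x)|_p = |a|_p·|b|_p²/|x|_p; (iii) if |x|_p > |b|_p then |f(x)|_p = |a|_p·|x|_p. -/

import Mathlib

open Filter

private lemma norm_add_big {p : ℕ} [Fact p.Prime] {y z : ℚ_[p]} (h : ‖y‖ < ‖z‖) :
    ‖z + y‖ = ‖z‖ := by
  rw [Padic.add_eq_max_of_ne (ne_of_gt h), max_eq_left h.le]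

/-- The (3,2)-rational map `f(x) = a·x·((x+b)/(x+c))²` over the p-adic numbers. -/
noncomputable def padicF {p : ℕ} [Fact p.Prime] (a b c : ℚ_[p]) : ℚ_[p] → ℚ_[p] :=
  fun x => a * x * ((x + b) / (x + c)) ^ 2

theorem norm_padicF_of_norm_c_lt_norm_b {p : ℕ} [Fact p.Prime] (a b c : ℚ_[p])
    (habc : a * (a - 1) * (b - c) * (a * b ^ 2 - c ^ 2) ≠ 0)
    (hcb : ‖c‖ < ‖b‖) (x : ℚ_[p]) (hx : x ≠ -c) :
    (‖x‖ < ‖c‖ → ‖padicF a b c x‖ = ‖a‖ * ‖b‖ ^ 2 / ‖c‖ ^ 2 * ‖x‖) ∧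
    (‖c‖ < ‖x‖ → ‖x‖ < ‖b‖ → ‖padicF a b c x‖ = ‖a‖ * ‖b‖ ^ 2 / ‖x‖) ∧
    (‖b‖ < ‖x‖ → ‖padicF a b c x‖ = ‖a‖ * ‖x‖) := by
  have hF : ‖padicF a b c x‖ = ‖a‖ * ‖x‖ * (‖x + b‖ / ‖x + c‖) ^ 2 := by
    simp [padicF, norm_mul, norm_div, norm_pow]
  refine ⟨fun h1 => ?_, fun h1 h2 => ?_, fun h1 => ?_⟩
  · have hc : (0:ℝ) < ‖c‖ := lt_of_le_of_lt (norm_nonneg x) h1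
    have hxb : ‖x + b‖ = ‖b‖ := by rw [add_comm]; exact norm_add_big (h1.trans hcb)
    have hxc : ‖x + c‖ = ‖c‖ := by rw [add_comm]; exact norm_add_big h1
    rw [hF, hxb, hxc]; field_simp
  · have hx0 : (0:ℝ) < ‖x‖ := lt_of_le_of_lt (norm_nonneg c) h1
    have hxb : ‖x + b‖ = ‖b‖ := by rw [add_comm]; exact norm_add_big h2
    have hxc : ‖x + c‖ = ‖x‖ := norm_add_big h1
    rw [hF, hxb, hxc]; field_simp
  · have hx0 : (0:ℝ) < ‖x‖ := lt_of_le_of_lt (norm_nonneg b) h1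
    have hxb : ‖x + b‖ = ‖x‖ := norm_add_big h1
    have hxc : ‖x + c‖ = ‖x‖ := norm_add_big (hcb.trans h1)
    rw [hF, hxb, hxc, div_self hx0.ne']; ring
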